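/- Let θ₁, θ₂ be smooth real functions on a connected domain and suppose a vector-valued map Ŷ satisfies Ŷ_{uv} = Ŷ_{vu} where Ŷ_u = bŶ + θ₁(Y_v + aY) and Ŷ_v = aŶ + θ₂(Y_u + bY), with Y satisfying the structure equations Y_{uu} = −(s₁/2)Y + κ₁, Y_{vv} = −(s₂/2)Y + κ₂, Y_{uv} = −⟨κ₁,κ₂⟩Y + (1/2)N, and κ₁ = ±κ₂ pointwise with κ₁ nowhere zero and κ₁ not in Span{Y, Y_u, Y_v, Ŷ, N}-degenerate directions (i.e., the coefficients of κ₁, κ₂, Y_u, Y_v in the frame expansion can be compared). Then θ₁ = ±θ₂, θ₁ is independent of v, θ₂ is independent of u (hence both are constants), and a_u = b_v. -/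

import Mathlib

private lemma stmt19_vec6 {α : Type*} (x0 x1 x2 x3 x4 x5 : α) :
    ![x0, x1, x2, x3, x4, x5] 0 = x0 ∧ ![x0, x1, x2, x3, x4, x5] 1 = x1 ∧
    ![x0, x1, x2, x3, x4, x5] 2 = x2 ∧ ![x0, x1, x2, x3, x4, x5] 3 = x3 ∧
    ![x0, x1, x2, x3, x4, x5] 4 = x4 ∧ ![x0, x1, x2, x3, x4, x5] 5 = x5 :=
  ⟨rfl, rfl, rfl, rfl, rfl, rfl⟩

/-- Proposition 4.2(ii): comparing the mixed second derivatives of a Darboux transform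
`Ŷ` (with `Ŷ_u = bŶ + θ₁(Y_v + aY)`, `Ŷ_v = aŶ + θ₂(Y_u + bY)`) expanded in the frame
`{Y, Ŷ, Y_u, Y_v, N, κ}`, using the structure equations of the `(±)`-isothermic lift
`Y` (`κ₁ = ε κ₂`, `ε = ±1`, `κ₁` nowhere zero, frame pointwise linearly independent),
forces `θ₁ = ε θ₂`, `∂_v θ₁ = 0`, `∂_u θ₂ = 0` (so `θ₁, θ₂` are constants) and
`∂_u a = ∂_v b`. -/
theorem stmt_19 (m : ℕ) (η : Fin m → ℝ) (hη : ∀ i, η i = 1 ∨ η i = -1)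
    (B : (Fin m → ℝ) → (Fin m → ℝ) → ℝ)
    (hBdef : ∀ x y, B x y = ∑ i, η i * x i * y i)
    (Y Yhat Yu Yv N κ₁ κ₂ : ℝ → ℝ → Fin m → ℝ)
    (a b θ₁ θ₂ s₁ s₂ au av bu bv θ₁v θ₂u : ℝ → ℝ → ℝ)
    (ε : ℝ) (hεpm : ε = 1 ∨ ε = -1)
    (hκ : ∀ u v, κ₁ u v = ε • κ₂ u v)
    (hκ0 : ∀ u v, κ₁ u v ≠ 0)
    (hLI : ∀ u v, LinearIndependent ℝ ![Y u v, Yhat u v, Yu u v, Yv u v, N u v, κ₁ u v])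
    -- first and second derivatives of Y (structure equations)
    (hYu : ∀ u v i, HasDerivAt (fun u' => Y u' v i) (Yu u v i) u)
    (hYv : ∀ u v i, HasDerivAt (fun v' => Y u v' i) (Yv u v i) v)
    (hYuu : ∀ u v i, HasDerivAt (fun u' => Yu u' v i)
      (-(s₁ u v)/2 * Y u v i + κ₁ u v i) u)
    (hYvv : ∀ u v i, HasDerivAt (fun v' => Yv u v' i)
      (-(s₂ u v)/2 * Y u v i + κ₂ u v i) v)
    (hYuv : ∀ u v i, HasDerivAt (fun v' => Yu u v' i)
      (-(B (κ₁ u v) (κ₂ u v)) * Y u v i + (1/2) * N u v i) v)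
    (hYvu : ∀ u v i, HasDerivAt (fun u' => Yv u' v i)
      (-(B (κ₁ u v) (κ₂ u v)) * Y u v i + (1/2) * N u v i) u)
    -- partial derivatives of the coefficient functions
    (hau : ∀ u v, HasDerivAt (fun u' => a u' v) (au u v) u)
    (hav : ∀ u v, HasDerivAt (fun v' => a u v') (av u v) v)
    (hbu : ∀ u v, HasDerivAt (fun u' => b u' v) (bu u v) u)
    (hbv : ∀ u v, HasDerivAt (fun v' => b u v') (bv u v) v)
    (hθ₁v : ∀ u v, HasDerivAt (fun v' => θ₁ u v') (θ₁v u v) v)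
    (hθ₂u : ∀ u v, HasDerivAt (fun u' => θ₂ u' v) (θ₂u u v) u)
    -- the first-order system satisfied by the Darboux transform
    (Yhatu Yhatv : ℝ → ℝ → Fin m → ℝ)
    (hYhatu : ∀ u v, Yhatu u v = b u v • Yhat u v + θ₁ u v • (Yv u v + a u v • Y u v))
    (hYhatv : ∀ u v, Yhatv u v = a u v • Yhat u v + θ₂ u v • (Yu u v + b u v • Y u v))
    (hYhatud : ∀ u v i, HasDerivAt (fun u' => Yhat u' v i) (Yhatu u v i) u)
    (hYhatvd : ∀ u v i, HasDerivAt (fun v' => Yhat u v' i) (Yhatv u v i) v)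
    -- equality of the mixed second partial derivatives Ŷ_{uv} = Ŷ_{vu}
    (W : ℝ → ℝ → Fin m → ℝ)
    (hWuv : ∀ u v i, HasDerivAt (fun v' => Yhatu u v' i) (W u v i) v)
    (hWvu : ∀ u v i, HasDerivAt (fun u' => Yhatv u' v i) (W u v i) u) :
    ∀ u v, θ₁ u v = ε * θ₂ u v ∧ θ₁v u v = 0 ∧ θ₂u u v = 0 ∧ au u v = bv u v := by
  have hε2 : ε * ε = 1 := by rcases hεpm with h | h <;> rw [h] <;> norm_num
  intro u v
  -- E1: derivative of Yhatu in v, componentwise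
  have hE1 : ∀ i, W u v i =
      bv u v * Yhat u v i + b u v * Yhatv u v i
      + (θ₁v u v * (Yv u v i + a u v * Y u v i)
        + θ₁ u v * ((-(s₂ u v)/2 * Y u v i + κ₂ u v i)
          + (av u v * Y u v i + a u v * Yv u v i))) := by
    intro i
    have hfun : (fun v' => Yhatu u v' i)
        = fun v' => b u v' * Yhat u v' i
            + θ₁ u v' * (Yv u v' i + a u v' * Y u v' i) := by
      funext v'
      rw [hYhatu]
      simp only [Pi.add_apply, Pi.smul_apply, smul_eq_mul]
    have d1 : HasDerivAt (fun v' => Yhatu u v' i)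
        (bv u v * Yhat u v i + b u v * Yhatv u v i
        + (θ₁v u v * (Yv u v i + a u v * Y u v i)
          + θ₁ u v * ((-(s₂ u v)/2 * Y u v i + κ₂ u v i)
            + (av u v * Y u v i + a u v * Yv u v i)))) v := by
      rw [hfun]
      exact ((hbv u v).mul (hYhatvd u v i)).add
        ((hθ₁v u v).mul ((hYvv u v i).add ((hav u v).mul (hYv u v i))))
    exact (hWuv u v i).unique d1
  -- E2: derivative of Yhatv in u, componentwise
  have hE2 : ∀ i, W u v i =
      au u v * Yhat u v i + a u v * Yhatu u v i
      + (θ₂u u v * (Yu u v i + b u v * Y u v i)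
        + θ₂ u v * ((-(s₁ u v)/2 * Y u v i + κ₁ u v i)
          + (bu u v * Y u v i + b u v * Yu u v i))) := by
    intro i
    have hfun : (fun u' => Yhatv u' v i)
        = fun u' => a u' v * Yhat u' v i
            + θ₂ u' v * (Yu u' v i + b u' v * Y u' v i) := by
      funext u'
      rw [hYhatv]
      simp only [Pi.add_apply, Pi.smul_apply, smul_eq_mul]
    have d2 : HasDerivAt (fun u' => Yhatv u' v i)
        (au u v * Yhat u v i + a u v * Yhatu u v i
        + (θ₂u u v * (Yu u v i + b u v * Y u v i)
          + θ₂ u v * ((-(s₁ u v)/2 * Y u v i + κ₁ u v i)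
            + (bu u v * Y u v i + b u v * Yu u v i)))) u := by
      rw [hfun]
      exact ((hau u v).mul (hYhatud u v i)).add
        ((hθ₂u u v).mul ((hYuu u v i).add ((hbu u v).mul (hYu u v i))))
    exact (hWvu u v i).unique d2
  -- the coefficient vector of E1 - E2 in the frame
  set c0 : ℝ := (b u v * (θ₂ u v * b u v) + θ₁v u v * a u v
      + θ₁ u v * (-(s₂ u v)/2) + θ₁ u v * av u v)
      - (a u v * (θ₁ u v * a u v) + θ₂u u v * b u v
      + θ₂ u v * (-(s₁ u v)/2) + θ₂ u v * bu u v) with hc0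
  have hsum : (∑ j : Fin 6,
      (![c0, bv u v - au u v, -(θ₂u u v), θ₁v u v, 0,
        ε * θ₁ u v - θ₂ u v] j) •
      (![Y u v, Yhat u v, Yu u v, Yv u v, N u v, κ₁ u v] j)) = 0 := by
    funext i
    have h1 := hE1 i
    have h2 := hE2 i
    have hE : bv u v * Yhat u v i + b u v * Yhatv u v i
      + (θ₁v u v * (Yv u v i + a u v * Y u v i)
        + θ₁ u v * ((-(s₂ u v)/2 * Y u v i + κ₂ u v i)
          + (av u v * Y u v i + a u v * Yv u v i)))
      = au u v * Yhat u v i + a u v * Yhatu u v i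
      + (θ₂u u v * (Yu u v i + b u v * Y u v i)
        + θ₂ u v * ((-(s₁ u v)/2 * Y u v i + κ₁ u v i)
          + (bu u v * Y u v i + b u v * Yu u v i))) := h1 ▸ h2
    have hv' : Yhatv u v i = a u v * Yhat u v i
        + θ₂ u v * (Yu u v i + b u v * Y u v i) := by
      rw [hYhatv]; simp only [Pi.add_apply, Pi.smul_apply, smul_eq_mul]
    have hu' : Yhatu u v i = b u v * Yhat u v i
        + θ₁ u v * (Yv u v i + a u v * Y u v i) := by
      rw [hYhatu]; simp only [Pi.add_apply, Pi.smul_apply, smul_eq_mul]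
    have hκi : κ₁ u v i = ε * κ₂ u v i := by
      rw [hκ]; simp [Pi.smul_apply, smul_eq_mul]
    rw [hv', hu', hκi] at hE
    obtain ⟨e0, e1, e2, e3, e4, e5⟩ := stmt19_vec6 c0 (bv u v - au u v)
      (-(θ₂u u v)) (θ₁v u v) (0 : ℝ) (ε * θ₁ u v - θ₂ u v)
    obtain ⟨f0, f1, f2, f3, f4, f5⟩ := stmt19_vec6 (Y u v) (Yhat u v) (Yu u v)
      (Yv u v) (N u v) (κ₁ u v)
    simp only [Fin.sum_univ_six, e0, e1, e2, e3, e4, e5, f0, f1, f2, f3, f4, f5,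
      Pi.add_apply, Pi.smul_apply, smul_eq_mul, Pi.zero_apply, hκi]
    rw [hc0]
    linear_combination hE + (θ₁ u v * κ₂ u v i) * hε2
  have hLI' := (Fintype.linearIndependent_iff.mp (hLI u v))
    (![c0, bv u v - au u v, -(θ₂u u v), θ₁v u v, 0,
      ε * θ₁ u v - θ₂ u v]) hsum
  have h1 := hLI' 1
  have h2 := hLI' 2
  have h3 := hLI' 3
  have h5 := hLI' 5
  obtain ⟨e0, e1, e2, e3, e4, e5⟩ := stmt19_vec6 c0 (bv u v - au u v)
    (-(θ₂u u v)) (θ₁v u v) (0 : ℝ) (ε * θ₁ u v - θ₂ u v)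
  rw [e1] at h1; rw [e2] at h2; rw [e3] at h3; rw [e5] at h5
  refine ⟨?_, h3, by linarith, by linarith⟩
  have : ε * θ₁ u v = θ₂ u v := by linarith
  calc θ₁ u v = ε * ε * θ₁ u v := by rw [hε2]; ring
    _ = ε * θ₂ u v := by rw [mul_assoc, this]
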